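/- Let H be a complex inner product space, let γ0, γ1, γ+, γ− be nonzero vectors in H, and let p, q be real numbers with 0 < p < 1 and 0 < q < 1. Suppose that for all x ∈ H: p·⟨γ0, x⟩·γ0 + (1 − p)·⟨γ1, x⟩·γ1 = q·⟨γ+, x⟩·γ+ + (1 − q)·⟨γ−, x⟩·γ−. Then the linear span of {γ0, γ1} equals the linear span of {γ+, γ−}; in particular, γ+ and γ− lie in the two-dimensional (or smaller) subspace spanned by γ0 and γ1. -/

import Mathlib

open Complex

lemma mem_span_pair_aux {H : Type*} [NormedAddCommGroup H] [InnerProductSpace ℂ H]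
    {γp γm : H} (hp : γp ≠ 0) (hm : γm ≠ 0) {q : ℝ} (hq0 : 0 < q) (hq1 : q < 1)
    {S : Submodule ℂ H}
    (h : ∀ x : H, ((q : ℂ) * (inner ℂ γp x : ℂ)) • γp
        + (((1 - q : ℝ) : ℂ) * (inner ℂ γm x : ℂ)) • γm ∈ S) :
    γp ∈ S ∧ γm ∈ S := by
  have hq1' : (0 : ℝ) < 1 - q := by linarith
  by_cases hdep : ∃ l : ℂ, γm = l • γp
  · obtain ⟨l, rfl⟩ := hdep
    have hv := h γp
    have hip : (inner ℂ γp γp : ℂ) ≠ 0 := inner_self_ne_zero.mpr hp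
    have hl : (starRingEnd ℂ) l * l = ((Complex.normSq l : ℝ) : ℂ) := by
      rw [mul_comm, Complex.mul_conj]
    have hco : (((q + (1 - q) * Complex.normSq l : ℝ) : ℂ)) ≠ 0 := by
      rw [Complex.ofReal_ne_zero]
      have := Complex.normSq_nonneg l
      positivity
    have key : ((q : ℂ) * (inner ℂ γp γp : ℂ)) • γp
        + (((1 - q : ℝ) : ℂ) * (inner ℂ (l • γp) γp : ℂ)) • (l • γp)
        = ((((q + (1 - q) * Complex.normSq l : ℝ) : ℂ)) * (inner ℂ γp γp : ℂ)) • γp := by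
      rw [inner_smul_left, smul_smul]
      rw [show ((q : ℂ) * (inner ℂ γp γp : ℂ)) • γp
          + ((((1 - q : ℝ) : ℂ) * ((starRingEnd ℂ) l * (inner ℂ γp γp : ℂ))) * l) • γp
          = (((q : ℂ) + ((1 - q : ℝ) : ℂ) * ((starRingEnd ℂ) l * l)) * (inner ℂ γp γp : ℂ)) • γp
        from by rw [← add_smul]; ring_nf]
      rw [hl]
      push_cast
      ring_nf
    rw [key] at hv
    have hc : (((q + (1 - q) * Complex.normSq l : ℝ) : ℂ)) * (inner ℂ γp γp : ℂ) ≠ 0 :=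
      mul_ne_zero hco hip
    have hpS : γp ∈ S := by
      have := S.smul_mem ((((q + (1 - q) * Complex.normSq l : ℝ) : ℂ)) * (inner ℂ γp γp : ℂ))⁻¹ hv
      rwa [smul_smul, inv_mul_cancel₀ hc, one_smul] at this
    exact ⟨hpS, S.smul_mem l hpS⟩
  · -- linearly independent case: strict Cauchy–Schwarz gives invertible determinant
    set a : ℂ := (q : ℂ) * (inner ℂ γp γp : ℂ) with ha
    set b : ℂ := ((1 - q : ℝ) : ℂ) * (inner ℂ γm γp : ℂ) with hb
    set c : ℂ := (q : ℂ) * (inner ℂ γp γm : ℂ) with hc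
    set d : ℂ := ((1 - q : ℝ) : ℂ) * (inner ℂ γm γm : ℂ) with hd
    have hv1 : a • γp + b • γm ∈ S := h γp
    have hv2 : c • γp + d • γm ∈ S := h γm
    have hdet : a * d - b * c ≠ 0 := by
      have hcs : ‖(inner ℂ γp γm : ℂ)‖ ≠ ‖γp‖ * ‖γm‖ := by
        intro hEq
        obtain ⟨r, hr, hrm⟩ := (norm_inner_eq_norm_iff hp hm).mp hEq
        exact hdep ⟨r, hrm⟩
      have hcs' : (inner ℂ γp γp : ℂ) * (inner ℂ γm γm : ℂ)
          - (inner ℂ γm γp : ℂ) * (inner ℂ γp γm : ℂ) ≠ 0 := by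
        rw [inner_self_eq_norm_sq_to_K, inner_self_eq_norm_sq_to_K,
          ← inner_conj_symm γp γm, Complex.mul_conj']
        intro hEq
        apply hcs
        rw [sub_eq_zero] at hEq
        have h3 : ‖γp‖ ^ 2 * ‖γm‖ ^ 2 = ‖(inner ℂ γm γp : ℂ)‖ ^ 2 := by
          apply Complex.ofReal_injective
          push_cast
          exact hEq
        rw [← norm_inner_symm] at h3
        have h4 : ‖(inner ℂ γp γm : ℂ)‖ ^ 2 = (‖γp‖ * ‖γm‖) ^ 2 := by rw [mul_pow]; linarith
        have h5 : 0 ≤ ‖γp‖ * ‖γm‖ := by positivity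
        nlinarith [norm_nonneg (inner ℂ γp γm : ℂ)]
      have : a * d - b * c = ((q : ℂ) * ((1 - q : ℝ) : ℂ)) *
          ((inner ℂ γp γp : ℂ) * (inner ℂ γm γm : ℂ)
            - (inner ℂ γm γp : ℂ) * (inner ℂ γp γm : ℂ)) := by
        rw [ha, hb, hc, hd]; ring
      rw [this]
      apply mul_ne_zero _ hcs'
      have hqc : (q : ℂ) ≠ 0 := by exact_mod_cast hq0.ne'
      have hq1c : ((1 - q : ℝ) : ℂ) ≠ 0 := by exact_mod_cast hq1'.ne'
      exact mul_ne_zero hqc hq1c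
    have hgp : (a * d - b * c) • γp = d • (a • γp + b • γm) - b • (c • γp + d • γm) := by
      module
    have hgm : (a * d - b * c) • γm = a • (c • γp + d • γm) - c • (a • γp + b • γm) := by
      module
    have hpS : γp ∈ S := by
      have hmem : (a * d - b * c) • γp ∈ S := by
        rw [hgp]; exact S.sub_mem (S.smul_mem d hv1) (S.smul_mem b hv2)
      have := S.smul_mem (a * d - b * c)⁻¹ hmem
      rwa [smul_smul, inv_mul_cancel₀ hdet, one_smul] at this
    have hmS : γm ∈ S := by
      have hmem : (a * d - b * c) • γm ∈ S := by
        rw [hgm]; exact S.sub_mem (S.smul_mem a hv2) (S.smul_mem c hv1)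
      have := S.smul_mem (a * d - b * c)⁻¹ hmem
      rwa [smul_smul, inv_mul_cancel₀ hdet, one_smul] at this
    exact ⟨hpS, hmS⟩

/-- If the mixed states coincide, i.e.
`p|γ0⟩⟨γ0| + (1−p)|γ1⟩⟨γ1| = q|γ+⟩⟨γ+| + (1−q)|γ−⟩⟨γ−|` with `0 < p < 1`, `0 < q < 1`
and all four vectors nonzero, then `span{γ0, γ1} = span{γ+, γ−}`. -/
theorem span_eq_of_mixed_state_eq {H : Type*} [NormedAddCommGroup H] [InnerProductSpace ℂ H]
    (γ0 γ1 γp γm : H) (h0 : γ0 ≠ 0) (h1 : γ1 ≠ 0) (hp : γp ≠ 0) (hm : γm ≠ 0)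
    (p q : ℝ) (hp0 : 0 < p) (hp1 : p < 1) (hq0 : 0 < q) (hq1 : q < 1)
    (heq : ∀ x : H,
      (p : ℂ) • (inner ℂ γ0 x : ℂ) • γ0 + ((1 - p : ℝ) : ℂ) • (inner ℂ γ1 x : ℂ) • γ1 =
        (q : ℂ) • (inner ℂ γp x : ℂ) • γp + ((1 - q : ℝ) : ℂ) • (inner ℂ γm x : ℂ) • γm) :
    Submodule.span ℂ ({γ0, γ1} : Set H) = Submodule.span ℂ ({γp, γm} : Set H) := by
  have h01 : ∀ x : H, ((p : ℂ) * (inner ℂ γ0 x : ℂ)) • γ0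
      + (((1 - p : ℝ) : ℂ) * (inner ℂ γ1 x : ℂ)) • γ1 ∈ Submodule.span ℂ ({γp, γm} : Set H) := by
    intro x
    rw [mul_smul, mul_smul, heq x]
    exact Submodule.add_mem _
      (Submodule.smul_mem _ _ (Submodule.smul_mem _ _
        (Submodule.subset_span (by simp))))
      (Submodule.smul_mem _ _ (Submodule.smul_mem _ _
        (Submodule.subset_span (by simp))))
  have hpm : ∀ x : H, ((q : ℂ) * (inner ℂ γp x : ℂ)) • γp
      + (((1 - q : ℝ) : ℂ) * (inner ℂ γm x : ℂ)) • γm ∈ Submodule.span ℂ ({γ0, γ1} : Set H) := by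
    intro x
    rw [mul_smul, mul_smul, ← heq x]
    exact Submodule.add_mem _
      (Submodule.smul_mem _ _ (Submodule.smul_mem _ _
        (Submodule.subset_span (by simp))))
      (Submodule.smul_mem _ _ (Submodule.smul_mem _ _
        (Submodule.subset_span (by simp))))
  obtain ⟨hpS, hmS⟩ := mem_span_pair_aux hp hm hq0 hq1 hpm
  obtain ⟨h0S, h1S⟩ := mem_span_pair_aux h0 h1 hp0 hp1 h01
  apply le_antisymm
  · rw [Submodule.span_le]
    rintro x (rfl | rfl) <;> simp_all
  · rw [Submodule.span_le]
    rintro x (rfl | rfl) <;> simp_all
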